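/- Let (X_k)_{k≥1} be a sequence of non-negative random variables with finite second moments such that (a) sup_k E[X_k] < ∞, (b) E[X_j X_k] ≤ E[X_j]·E[X_k] for all j ≠ k, and (c) ∑_{k≥1} Var(X_k)/k² < ∞. Let S_m = X_1 + ⋯ + X_m. Then (S_m − E[S_m])/m → 0 almost surely. -/

import Mathlib

open MeasureTheory ProbabilityTheory Filter Finset

lemma my_int_mul {Ω : Type*} [MeasureSpace Ω] {f g : Ω → ℝ}
    (hf : MemLp f 2 ℙ) (hg : MemLp g 2 ℙ) : Integrable (fun ω => f ω * g ω) ℙ := by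
  refine Integrable.mono' (((hf.integrable_sq.add hg.integrable_sq)).div_const 2)
    (hf.aestronglyMeasurable.mul hg.aestronglyMeasurable) (ae_of_all _ fun ω => ?_)
  simp only [Pi.add_apply]
  rw [Real.norm_eq_abs, abs_mul]
  nlinarith [sq_nonneg (|f ω| - |g ω|), sq_abs (f ω), sq_abs (g ω)]

lemma my_geom_tail {c : ℝ} (hc : 1 < c) (j N : ℕ) :
    ∑ i ∈ range N with j < ⌊c ^ i⌋₊, ((⌊c ^ i⌋₊ : ℝ) ^ 2)⁻¹ ≤
      4 * (c ^ 5 * (c - 1)⁻¹ ^ 3) / ((j : ℝ) + 1) ^ 2 := by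
  have upos : ∀ i : ℕ, 1 ≤ ⌊c ^ i⌋₊ := fun i => by
    rw [Nat.one_le_floor_iff]; exact one_le_pow₀ hc.le
  set j' : ℝ := max (j : ℝ) 2⁻¹ with hj'def
  have hj' : (0 : ℝ) < j' := lt_of_lt_of_le (by norm_num) (le_max_right _ _)
  have hfil : ∀ i : ℕ, (j < ⌊c ^ i⌋₊) ↔ (j' < (⌊c ^ i⌋₊ : ℝ)) := by
    intro i
    constructor
    · intro h
      have h1 : (j : ℝ) + 1 ≤ (⌊c ^ i⌋₊ : ℝ) := by exact_mod_cast h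
      have h2 : (1 : ℝ) ≤ (⌊c ^ i⌋₊ : ℝ) := by exact_mod_cast upos i
      rcases max_cases (j : ℝ) 2⁻¹ with ⟨he, _⟩ | ⟨he, _⟩ <;> rw [hj'def, he] <;> linarith
    · intro h
      have : (j : ℝ) < (⌊c ^ i⌋₊ : ℝ) := lt_of_le_of_lt (le_max_left _ _) h
      exact_mod_cast this
  have heq : (∑ i ∈ range N with j < ⌊c ^ i⌋₊, ((⌊c ^ i⌋₊ : ℝ) ^ 2)⁻¹)
      = ∑ i ∈ range N with j' < (⌊c ^ i⌋₊ : ℝ), ((⌊c ^ i⌋₊ : ℝ) ^ 2)⁻¹ := by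
    apply Finset.sum_congr _ (fun _ _ => rfl)
    exact Finset.filter_congr fun i _ => by simp [hfil i]
  rw [heq]
  have hmain := sum_div_nat_floor_pow_sq_le_div_sq N hj' hc
  simp only [one_div] at hmain
  refine hmain.trans ?_
  have hA : (0 : ℝ) ≤ c ^ 5 * (c - 1)⁻¹ ^ 3 := mul_nonneg (by positivity) (pow_nonneg (inv_nonneg.2 (by linarith)) 3)
  have h2j : (j : ℝ) + 1 ≤ 2 * j' := by
    rcases Nat.eq_zero_or_pos j with rfl | hjpos
    · rw [hj'def]; norm_num
    · have h1 : (1 : ℝ) ≤ (j : ℝ) := by exact_mod_cast hjpos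
      rw [hj'def, max_eq_left (le_trans (by norm_num) h1)]; linarith
  have hsq : ((j : ℝ) + 1) ^ 2 ≤ 4 * j' ^ 2 := by nlinarith [hj'.le, Nat.cast_nonneg (α := ℝ) j]
  rw [div_le_div_iff₀ (by positivity) (by positivity)]
  nlinarith [mul_le_mul_of_nonneg_left hsq hA]

lemma my_var_sum {Ω : Type*} [MeasureSpace Ω] [IsProbabilityMeasure (ℙ : Measure Ω)]
    (X : ℕ → Ω → ℝ) (hL2 : ∀ k, MemLp (X k) 2 ℙ)
    (hb : ∀ j k, j ≠ k → ∫ ω, X j ω * X k ω ≤ (∫ ω, X j ω) * ∫ ω, X k ω) (m : ℕ) :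
    variance (fun ω => ∑ j ∈ range m, X j ω) ℙ ≤ ∑ j ∈ range m, variance (X j) ℙ := by
  have hSL2 : MemLp (fun ω => ∑ j ∈ range m, X j ω) 2 ℙ := by
    have h := memLp_finset_sum' (range m) (fun j (_ : j ∈ range m) => hL2 j)
    convert h using 1
    ext ω; simp
  have hint : ∀ j : ℕ, Integrable (X j) ℙ := fun j => (hL2 j).integrable one_le_two
  have hint2 : ∀ j k : ℕ, Integrable (fun ω => X j ω * X k ω) ℙ :=
    fun j k => my_int_mul (hL2 j) (hL2 k)
  set μf : ℕ → ℝ := fun j => ∫ ω, X j ω with hμf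
  have hES : ∫ ω, ∑ j ∈ range m, X j ω = ∑ j ∈ range m, μf j :=
    integral_finset_sum _ fun j _ => hint j
  have hES2 : ∫ ω, (∑ j ∈ range m, X j ω) ^ 2
      = ∑ j ∈ range m, ∑ k ∈ range m, ∫ ω, X j ω * X k ω := by
    have hsq : ∀ ω : Ω, (∑ j ∈ range m, X j ω) ^ 2
        = ∑ j ∈ range m, ∑ k ∈ range m, X j ω * X k ω := by
      intro ω; rw [sq, Finset.sum_mul_sum]
    simp_rw [hsq]
    rw [integral_finset_sum _ fun j _ => integrable_finset_sum _ fun k _ => hint2 j k]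
    exact Finset.sum_congr rfl fun j _ => integral_finset_sum _ fun k _ => hint2 j k
  have hVarj : ∀ j : ℕ, variance (X j) ℙ = (∫ ω, X j ω ^ 2) - μf j ^ 2 := by
    intro j
    rw [variance_eq_sub (hL2 j)]
    congr 1
  have key : ∑ j ∈ range m, ∑ k ∈ range m, ∫ ω, X j ω * X k ω
      ≤ (∑ j ∈ range m, μf j) ^ 2 + ∑ j ∈ range m, variance (X j) ℙ := by
    have step1 : ∀ j ∈ range m, ∑ k ∈ range m, ∫ ω, X j ω * X k ω
        ≤ ∑ k ∈ range m, (μf j * μf k + if j = k then variance (X j) ℙ else 0) := by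
      intro j hj
      refine Finset.sum_le_sum fun k _ => ?_
      by_cases h : j = k
      · subst h
        have e : ∫ ω, X j ω * X j ω = ∫ ω, X j ω ^ 2 := by
          congr 1; ext ω; rw [sq]
        rw [if_pos rfl, hVarj j, e]
        linarith [pow_two (μf j)]
      · rw [if_neg h, add_zero]; exact hb j k h
    refine (Finset.sum_le_sum step1).trans (le_of_eq ?_)
    simp_rw [Finset.sum_add_distrib]
    congr 1
    · rw [sq, Finset.sum_mul_sum]
    · refine Finset.sum_congr rfl fun j hj => ?_
      rw [Finset.sum_ite_eq (range m) j (fun _ => variance (X j) ℙ), if_pos hj]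
  have e1 : (ℙ : Measure Ω)[(fun ω => ∑ j ∈ range m, X j ω) ^ 2]
      = ∫ ω, (∑ j ∈ range m, X j ω) ^ 2 := by
    congr 1
  rw [variance_eq_sub hSL2, e1, hES2]
  have e2 : (ℙ : Measure Ω)[fun ω => ∑ j ∈ range m, X j ω] = ∑ j ∈ range m, μf j := hES
  rw [e2]
  linarith [key]

/-- Etemadi's strong law: non-negative random variables with finite second
moments, uniformly bounded means, `E[X_j X_k] ≤ E[X_j] E[X_k]` for `j ≠ k`, and
`∑ Var(X_k)/k² < ∞` satisfy `(S_m − E S_m)/m → 0` almost surely. -/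
theorem stmt2 {Ω : Type*} [MeasureSpace Ω] [IsProbabilityMeasure (ℙ : Measure Ω)]
    (X : ℕ → Ω → ℝ)
    (hmeas : ∀ k, Measurable (X k))
    (hnn : ∀ k ω, 0 ≤ X k ω)
    (hL2 : ∀ k, MemLp (X k) 2 ℙ)
    (ha : ∃ C : ℝ, ∀ k, ∫ ω, X k ω ≤ C)
    (hb : ∀ j k, j ≠ k → ∫ ω, X j ω * X k ω ≤ (∫ ω, X j ω) * ∫ ω, X k ω)
    (hc : Summable fun k : ℕ => variance (X k) ℙ / ((k : ℝ) + 1) ^ 2) :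
    ∀ᵐ ω, Tendsto
      (fun m : ℕ =>
        ((∑ j ∈ Finset.range m, X j ω) - ∑ j ∈ Finset.range m, ∫ ω', X j ω') / m)
      atTop (nhds 0) := by
  obtain ⟨C, hC⟩ := ha
  set μf : ℕ → ℝ := fun j => ∫ ω, X j ω with hμf
  set A : ℕ → ℝ := fun m => ∑ j ∈ range m, μf j with hAdef
  have hvnn : ∀ k : ℕ, 0 ≤ variance (X k) ℙ / ((k : ℝ) + 1) ^ 2 := fun k =>
    div_nonneg (variance_nonneg _ _) (by positivity)
  set T : ℝ := ∑' k : ℕ, variance (X k) ℙ / ((k : ℝ) + 1) ^ 2 with hT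
  have hSL2 : ∀ m : ℕ, MemLp (fun ω => ∑ j ∈ range m, X j ω) 2 ℙ := fun m => by
    have h := memLp_finset_sum' (range m) (fun j (_ : j ∈ range m) => hL2 j)
    convert h using 1; ext ω; simp
  have hES : ∀ m : ℕ, ∫ ω, ∑ j ∈ range m, X j ω = A m := fun m =>
    integral_finset_sum _ fun j _ => (hL2 j).integrable one_le_two
  have hVar := my_var_sum X hL2 hb
  -- step 1 : Borel-Cantelli along geometric subsequences
  have aux1 : ∀ c : ℝ, 1 < c → ∀ ε : ℝ, 0 < ε → ∀ᵐ ω, ∀ᶠ n : ℕ in atTop,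
      |(∑ j ∈ range ⌊c ^ n⌋₊, X j ω) - A ⌊c ^ n⌋₊| < ε * ⌊c ^ n⌋₊ := by
    intro c c_one ε εpos
    set u : ℕ → ℕ := fun n => ⌊c ^ n⌋₊ with hu
    have u_mono : Monotone u := fun i j hij => Nat.floor_mono (pow_right_mono₀ c_one.le hij)
    have u_pos : ∀ n, 0 < u n := fun n => Nat.floor_pos.2 (one_le_pow₀ c_one.le)
    have hKnn : (0:ℝ) ≤ 4 * (c ^ 5 * (c - 1)⁻¹ ^ 3) :=
      mul_nonneg (by norm_num)
        (mul_nonneg (pow_nonneg (by linarith) 5) (pow_nonneg (inv_nonneg.2 (by linarith)) 3))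
    set K : ℝ := 4 * (c ^ 5 * (c - 1)⁻¹ ^ 3) * T with hK
    have I2 : ∀ N : ℕ, ∑ i ∈ range N,
        ((u i : ℝ) ^ 2)⁻¹ * variance (fun ω => ∑ j ∈ range (u i), X j ω) ℙ ≤ K := by
      intro N
      calc ∑ i ∈ range N, ((u i : ℝ) ^ 2)⁻¹ * variance (fun ω => ∑ j ∈ range (u i), X j ω) ℙ
          ≤ ∑ i ∈ range N, ((u i : ℝ) ^ 2)⁻¹ * ∑ j ∈ range (u i), variance (X j) ℙ :=
            Finset.sum_le_sum fun i _ =>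
              mul_le_mul_of_nonneg_left (hVar (u i)) (inv_nonneg.2 (sq_nonneg _))
        _ = ∑ j ∈ range (u (N - 1)),
              (∑ i ∈ range N with j < u i, ((u i : ℝ) ^ 2)⁻¹) * variance (X j) ℙ := by
            simp_rw [mul_sum, sum_mul, sum_sigma']
            refine sum_nbij' (fun p ↦ ⟨p.2, p.1⟩) (fun p ↦ ⟨p.2, p.1⟩) ?_ ?_ ?_ ?_ ?_
            · simp only [mem_sigma, mem_range, filter_congr_decidable, mem_filter, and_imp,
                Sigma.forall]
              exact fun a b haN hb ↦ ⟨hb.trans_le <| u_mono <| Nat.le_pred_of_lt haN, haN, hb⟩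
            all_goals aesop
        _ ≤ ∑ j ∈ range (u (N - 1)),
              (4 * (c ^ 5 * (c - 1)⁻¹ ^ 3) / ((j : ℝ) + 1) ^ 2) * variance (X j) ℙ :=
            Finset.sum_le_sum fun j _ =>
              mul_le_mul_of_nonneg_right (my_geom_tail c_one j N) (variance_nonneg _ _)
        _ = 4 * (c ^ 5 * (c - 1)⁻¹ ^ 3) *
              ∑ j ∈ range (u (N - 1)), variance (X j) ℙ / ((j : ℝ) + 1) ^ 2 := by
            rw [mul_sum]; exact Finset.sum_congr rfl fun j _ => by ring
        _ ≤ K := by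
            rw [hK]
            exact mul_le_mul_of_nonneg_left (Summable.sum_le_tsum _ (fun k _ => hvnn k) hc) hKnn
    have I3 : ∀ N : ℕ, ∑ i ∈ range N,
        ℙ {ω | (u i * ε : ℝ) ≤ |(∑ j ∈ range (u i), X j ω) - A (u i)|}
        ≤ ENNReal.ofReal (ε⁻¹ ^ 2 * K) := by
      intro N
      calc ∑ i ∈ range N, ℙ {ω | (u i * ε : ℝ) ≤ |(∑ j ∈ range (u i), X j ω) - A (u i)|}
          ≤ ∑ i ∈ range N, ENNReal.ofReal
              (variance (fun ω => ∑ j ∈ range (u i), X j ω) ℙ / (u i * ε) ^ 2) := by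
            refine Finset.sum_le_sum fun i _ => ?_
            have hpos : (0:ℝ) < u i * ε :=
              mul_pos (by exact_mod_cast u_pos i) εpos
            have h := meas_ge_le_variance_div_sq (hSL2 (u i)) hpos
            have e : (ℙ : Measure Ω)[fun ω => ∑ j ∈ range (u i), X j ω] = A (u i) := hES (u i)
            rw [e] at h
            exact h
          _ = ENNReal.ofReal (∑ i ∈ range N,
              variance (fun ω => ∑ j ∈ range (u i), X j ω) ℙ / (u i * ε) ^ 2) :=
            (ENNReal.ofReal_sum_of_nonneg fun i _ =>
              div_nonneg (variance_nonneg _ _) (sq_nonneg _)).symm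
          _ ≤ ENNReal.ofReal (ε⁻¹ ^ 2 * K) := by
            apply ENNReal.ofReal_le_ofReal
            have e : ∀ i : ℕ, variance (fun ω => ∑ j ∈ range (u i), X j ω) ℙ / (u i * ε) ^ 2
                = ε⁻¹ ^ 2 * (((u i : ℝ) ^ 2)⁻¹ *
                    variance (fun ω => ∑ j ∈ range (u i), X j ω) ℙ) := by
              intro i
              rw [mul_pow, div_eq_mul_inv, mul_inv, ← inv_pow]
              ring
            simp_rw [e, ← mul_sum]
            exact mul_le_mul_of_nonneg_left (I2 N) (by positivity)
    have I4 : (∑' i, ℙ {ω | (u i * ε : ℝ) ≤ |(∑ j ∈ range (u i), X j ω) - A (u i)|}) < ⊤ :=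
      (le_of_tendsto_of_tendsto' (ENNReal.tendsto_nat_tsum _) tendsto_const_nhds I3).trans_lt
        ENNReal.ofReal_lt_top
    filter_upwards [ae_eventually_notMem I4.ne] with ω hω
    filter_upwards [hω] with n hn
    simp only [Set.mem_setOf_eq, not_le] at hn
    calc |(∑ j ∈ range (u n), X j ω) - A (u n)| < u n * ε := hn
      _ = ε * u n := mul_comm _ _
  -- step 2 : convergence along subsequences, with the drift added
  have aux2 : ∀ c : ℝ, 1 < c → ∀ᵐ ω, Tendsto (fun n : ℕ =>
      ((∑ j ∈ range ⌊c ^ n⌋₊, X j ω) - A ⌊c ^ n⌋₊ + C * ⌊c ^ n⌋₊) / ⌊c ^ n⌋₊)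
      atTop (nhds C) := by
    intro c c_one
    obtain ⟨v, -, v_pos, v_lim⟩ :
        ∃ v : ℕ → ℝ, StrictAnti v ∧ (∀ n : ℕ, 0 < v n) ∧ Tendsto v atTop (nhds 0) :=
      exists_seq_strictAnti_tendsto (0 : ℝ)
    have hv := fun i => aux1 c c_one (v i) (v_pos i)
    filter_upwards [ae_all_iff.2 hv] with ω hω
    have u_pos : ∀ n : ℕ, (0:ℝ) < (⌊c ^ n⌋₊ : ℝ) := fun n => by
      exact_mod_cast Nat.floor_pos.2 (one_le_pow₀ c_one.le)
    have h0 : Tendsto (fun n : ℕ =>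
        ((∑ j ∈ range ⌊c ^ n⌋₊, X j ω) - A ⌊c ^ n⌋₊) / ⌊c ^ n⌋₊) atTop (nhds 0) := by
      rw [NormedAddCommGroup.tendsto_nhds_zero]
      intro ε εpos
      obtain ⟨i, hi⟩ : ∃ i, v i < ε := ((tendsto_order.1 v_lim).2 ε εpos).exists
      filter_upwards [hω i] with n hn
      rw [Real.norm_eq_abs, abs_div, abs_of_pos (u_pos n), div_lt_iff₀ (u_pos n)]
      calc |(∑ j ∈ range ⌊c ^ n⌋₊, X j ω) - A ⌊c ^ n⌋₊| < v i * ⌊c ^ n⌋₊ := hn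
        _ ≤ ε * ⌊c ^ n⌋₊ := mul_le_mul_of_nonneg_right hi.le (u_pos n).le
    have heq : (fun n : ℕ =>
        ((∑ j ∈ range ⌊c ^ n⌋₊, X j ω) - A ⌊c ^ n⌋₊ + C * ⌊c ^ n⌋₊) / ⌊c ^ n⌋₊)
        = fun n : ℕ =>
        ((∑ j ∈ range ⌊c ^ n⌋₊, X j ω) - A ⌊c ^ n⌋₊) / ⌊c ^ n⌋₊ + C := by
      ext n
      field_simp [(u_pos n).ne']
    rw [heq]
    simpa using h0.add (tendsto_const_nhds : Tendsto (fun _ : ℕ => C) atTop (nhds C))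
  -- step 3 : assembly via the sandwich lemma for monotone functions
  obtain ⟨cs, -, cone, clim⟩ :
      ∃ cs : ℕ → ℝ, StrictAnti cs ∧ (∀ n : ℕ, 1 < cs n) ∧ Tendsto cs atTop (nhds 1) :=
    exists_seq_strictAnti_tendsto (1 : ℝ)
  have H := fun k => aux2 (cs k) (cone k)
  filter_upwards [ae_all_iff.2 H] with ω hω
  have mono : Monotone (fun m : ℕ => (∑ j ∈ range m, X j ω) - A m + C * m) := by
    apply monotone_nat_of_le_succ
    intro m
    have h1 : μf m ≤ C := hC m
    have h2 : 0 ≤ X m ω := hnn m ω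
    have hA1 : A (m + 1) = A m + μf m := by rw [hAdef]; exact Finset.sum_range_succ _ _
    rw [Finset.sum_range_succ, hA1]
    push_cast
    linarith
  have main := tendsto_div_of_monotone_of_tendsto_div_floor_pow
    (fun m : ℕ => (∑ j ∈ range m, X j ω) - A m + C * m) C mono cs cone clim hω
  have main2 : Tendsto (fun n : ℕ =>
      ((∑ j ∈ range n, X j ω) - A n + C * n) / n - C) atTop (nhds 0) := by
    simpa using main.sub_const C
  refine main2.congr' ?_
  filter_upwards [eventually_ge_atTop 1] with n hn
  have hne : (n : ℝ) ≠ 0 := by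
    have : (1:ℝ) ≤ n := by exact_mod_cast hn
    linarith
  field_simp
  ring
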